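/- Suppose every element of X belongs to some member of 𝓑, F : ℝⁿ × X → Y is (R,𝓑)-multi-almost automorphic, and R contains a sequence every subsequence of which is unbounded. Then for every a ≥ 0 one has the supremum formula sup_{t ∈ ℝⁿ, x ∈ X} ‖F(t; x)‖_Y = sup_{t ∈ ℝⁿ, |t| ≥ a, x ∈ X} ‖F(t; x)‖_Y (equality in [0, ∞]). -/

import Mathlib

open Filter Topology MeasureTheory

noncomputable section

/-- `F : ℝⁿ × X → Y` is `(R, 𝓑)`-multi-almost automorphic. -/
def MultiAA {n : ℕ} {X Y : Type*} [NormedAddCommGroup X] [NormedAddCommGroup Y]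
    (R : Set (ℕ → EuclideanSpace ℝ (Fin n))) (𝓑 : Set (Set X))
    (F : EuclideanSpace ℝ (Fin n) → X → Y) : Prop :=
  Continuous (fun p : EuclideanSpace ℝ (Fin n) × X => F p.1 p.2) ∧
  ∀ B ∈ 𝓑, ∀ b ∈ R, ∃ k : ℕ → ℕ, StrictMono k ∧
    ∃ Fs : EuclideanSpace ℝ (Fin n) → X → Y,
      (∀ x ∈ B, ∀ t, Tendsto (fun l => F (t + b (k l)) x) atTop (𝓝 (Fs t x))) ∧
      (∀ x ∈ B, ∀ t, Tendsto (fun l => Fs (t - b (k l)) x) atTop (𝓝 (F t x)))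

/-- `F : ℝⁿ × X → Y` is compactly `(R, 𝓑)`-multi-almost automorphic: the two limits
converge uniformly in `t` on compact subsets of `ℝⁿ`, for each `x ∈ B`. -/
def CompactMultiAA {n : ℕ} {X Y : Type*} [NormedAddCommGroup X] [NormedAddCommGroup Y]
    (R : Set (ℕ → EuclideanSpace ℝ (Fin n))) (𝓑 : Set (Set X))
    (F : EuclideanSpace ℝ (Fin n) → X → Y) : Prop :=
  Continuous (fun p : EuclideanSpace ℝ (Fin n) × X => F p.1 p.2) ∧
  ∀ B ∈ 𝓑, ∀ b ∈ R, ∃ k : ℕ → ℕ, StrictMono k ∧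
    ∃ Fs : EuclideanSpace ℝ (Fin n) → X → Y,
      (∀ x ∈ B, ∀ K : Set (EuclideanSpace ℝ (Fin n)), IsCompact K →
        TendstoUniformlyOn (fun l t => F (t + b (k l)) x) (fun t => Fs t x) atTop K) ∧
      (∀ x ∈ B, ∀ K : Set (EuclideanSpace ℝ (Fin n)), IsCompact K →
        TendstoUniformlyOn (fun l t => Fs (t - b (k l)) x) (fun t => F t x) atTop K)

open scoped ENNReal NNReal

/-- the supremum formula for `(R,𝓑)`-multi-almost automorphic functions. -/
theorem multiAA_sup_formula {n : ℕ} {X Y : Type*}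
    [NormedAddCommGroup X] [NormedSpace ℝ X] [CompleteSpace X]
    [NormedAddCommGroup Y] [NormedSpace ℝ Y] [CompleteSpace Y]
    (R : Set (ℕ → EuclideanSpace ℝ (Fin n))) (𝓑 : Set (Set X))
    (hR : R.Nonempty) (h𝓑 : 𝓑.Nonempty)
    (hcov : ∀ x : X, ∃ B ∈ 𝓑, x ∈ B)
    (F : EuclideanSpace ℝ (Fin n) → X → Y)
    (hF : MultiAA R 𝓑 F)
    (hb : ∃ b ∈ R, ∀ k : ℕ → ℕ, StrictMono k →
      ¬ Bornology.IsBounded (Set.range fun j => b (k j)))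
    (a : ℝ) (ha : 0 ≤ a) :
    (⨆ (t : EuclideanSpace ℝ (Fin n)) (x : X), (‖F t x‖₊ : ℝ≥0∞)) =
      ⨆ (t : EuclideanSpace ℝ (Fin n)) (_ : a ≤ ‖t‖) (x : X), (‖F t x‖₊ : ℝ≥0∞) := by
  set S := ⨆ (t : EuclideanSpace ℝ (Fin n)) (_ : a ≤ ‖t‖) (x : X), (‖F t x‖₊ : ℝ≥0∞) with hS
  apply le_antisymm
  · refine iSup_le fun t => iSup_le fun x => ?_
    obtain ⟨B, hB, hx⟩ := hcov x
    obtain ⟨b, hbR, hbu⟩ := hb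
    obtain ⟨k, hk, Fs, h1, h2⟩ := hF.2 B hB b hbR
    -- the norms of b (k l) tend to infinity
    have htend : Tendsto (fun l => ‖b (k l)‖) atTop atTop := by
      by_contra hcon
      rw [tendsto_atTop] at hcon
      push_neg at hcon
      obtain ⟨C, hC⟩ := hcon
      obtain ⟨m, hm, hmlt⟩ := Filter.extraction_of_frequently_atTop
        (by simpa [not_le] using hC)
      refine hbu (k ∘ m) (hk.comp hm) ?_
      refine isBounded_iff_forall_norm_le.2 ⟨C, ?_⟩
      rintro _ ⟨j, rfl⟩
      exact (hmlt j).le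
    -- key: Fs is bounded by S everywhere
    have keyA : ∀ s : EuclideanSpace ℝ (Fin n), (‖Fs s x‖₊ : ℝ≥0∞) ≤ S := by
      intro s
      have htd : Tendsto (fun l => (‖F (s + b (k l)) x‖₊ : ℝ≥0∞)) atTop
          (𝓝 (‖Fs s x‖₊ : ℝ≥0∞)) :=
        (ENNReal.continuous_coe.tendsto _).comp (h1 x hx s).nnnorm
      refine le_of_tendsto htd ?_
      have hev : ∀ᶠ l in atTop, a + ‖s‖ ≤ ‖b (k l)‖ := htend.eventually_ge_atTop _
      filter_upwards [hev] with l hl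
      have hnorm : a ≤ ‖s + b (k l)‖ := by
        have := norm_sub_norm_le (b (k l)) (-s)
        simp only [norm_neg, sub_neg_eq_add] at this
        have : ‖b (k l)‖ - ‖s‖ ≤ ‖b (k l) + s‖ := by
          calc ‖b (k l)‖ - ‖s‖ ≤ ‖b (k l) - (-s)‖ := by
                simpa using norm_sub_norm_le (b (k l)) (-s)
            _ = ‖b (k l) + s‖ := by rw [sub_neg_eq_add]
        rw [add_comm]
        linarith
      exact le_iSup_of_le (s + b (k l)) (le_iSup_of_le hnorm
        (le_iSup (fun x' => (‖F (s + b (k l)) x'‖₊ : ℝ≥0∞)) x))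
    have htd2 : Tendsto (fun l => (‖Fs (t - b (k l)) x‖₊ : ℝ≥0∞)) atTop
        (𝓝 (‖F t x‖₊ : ℝ≥0∞)) :=
      (ENNReal.continuous_coe.tendsto _).comp (h2 x hx t).nnnorm
    exact le_of_tendsto' htd2 fun l => keyA _
  · exact iSup_le fun t => iSup_le fun _ => iSup_le fun x =>
      le_iSup_of_le t (le_iSup (fun x' => (‖F t x'‖₊ : ℝ≥0∞)) x)
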